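/- Let l ≥ 0 and d ≥ 1, and let F₀ ∈ F₂[[z]] be the power series whose coefficient at z^m is 1 if and only if ν₂(m+1) ≥ l and ν₂(m+1) ≡ l (mod d). Then (1 + z^{2^l}) · ( F₀ + Σ_{n=1}^{d−1} z^{2^n − 1} F₀^{2^n} ) = z^{2^l − 1} in F₂[[z]]. -/

import Mathlib

open PowerSeries Finset

lemma zmod2_mul_self (x : ZMod 2) : x * x = x := by revert x; decide

lemma coeff_sq2 (φ : PowerSeries (ZMod 2)) (m : ℕ) :
    PowerSeries.coeff m (φ ^ 2) =
      if 2 ∣ m then PowerSeries.coeff (m / 2) φ else 0 := by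
  rw [sq, PowerSeries.coeff_mul]
  by_cases h2 : 2 ∣ m
  · obtain ⟨k, rfl⟩ := h2
    have hk : 2 * k / 2 = k := by omega
    rw [if_pos ⟨k, rfl⟩, hk]
    have hmem : ((k, k) : ℕ × ℕ) ∈ Finset.HasAntidiagonal.antidiagonal (2 * k) := by
      rw [Finset.HasAntidiagonal.mem_antidiagonal]; omega
    rw [← Finset.add_sum_erase _ _ hmem]
    have h0 : ∑ p ∈ (Finset.HasAntidiagonal.antidiagonal (2 * k)).erase (k, k),
        PowerSeries.coeff p.1 φ * PowerSeries.coeff p.2 φ = 0 := by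
      apply Finset.sum_involution (fun p _ => Prod.swap p)
      · intro p _
        simp only [Prod.fst_swap, Prod.snd_swap]
        rw [mul_comm]
        exact CharTwo.add_self_eq_zero _
      · intro p hp _
        rw [Finset.mem_erase, Finset.HasAntidiagonal.mem_antidiagonal] at hp
        intro hsw
        have h1 : p.2 = p.1 := congrArg Prod.fst hsw
        exact hp.1 (by ext <;> omega)
      · intro p hp
        rw [Finset.mem_erase, Finset.HasAntidiagonal.mem_antidiagonal] at hp ⊢
        constructor
        · intro hsw
          have h1 : p.2 = k := congrArg Prod.fst hsw
          have h2 : p.1 = k := congrArg Prod.snd hsw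
          exact hp.1 (by ext <;> omega)
        · simp only [Prod.fst_swap, Prod.snd_swap]; omega
      · intro p _; rfl
    rw [h0, add_zero, zmod2_mul_self]
  · rw [if_neg h2]
    apply Finset.sum_involution (fun p _ => Prod.swap p)
    · intro p _
      simp only [Prod.fst_swap, Prod.snd_swap]
      rw [mul_comm]
      exact CharTwo.add_self_eq_zero _
    · intro p hp _
      rw [Finset.HasAntidiagonal.mem_antidiagonal] at hp
      intro hsw
      have h1 : p.2 = p.1 := congrArg Prod.fst hsw
      omega
    · intro p hp
      rw [Finset.HasAntidiagonal.mem_antidiagonal] at hp ⊢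
      simp only [Prod.fst_swap, Prod.snd_swap]; omega
    · intro p _; rfl

lemma coeff_pow2 (φ : PowerSeries (ZMod 2)) (n m : ℕ) :
    PowerSeries.coeff m (φ ^ 2 ^ n) =
      if 2 ^ n ∣ m then PowerSeries.coeff (m / 2 ^ n) φ else 0 := by
  induction n generalizing m with
  | zero => simp
  | succ n ih =>
    have : φ ^ 2 ^ (n + 1) = (φ ^ 2 ^ n) ^ 2 := by
      rw [← pow_mul, pow_succ]
    rw [this, coeff_sq2]
    by_cases h2 : 2 ∣ m
    · rw [if_pos h2, ih]
      have hiff : 2 ^ n ∣ m / 2 ↔ 2 ^ (n + 1) ∣ m := by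
        rw [Nat.dvd_div_iff_mul_dvd h2, pow_succ, Nat.mul_comm]
      by_cases h : 2 ^ (n + 1) ∣ m
      · rw [if_pos (hiff.mpr h), if_pos h, Nat.div_div_eq_div_mul, ← pow_succ']
      · rw [if_neg (fun hc => h (hiff.mp hc)), if_neg h]
    · rw [if_neg h2, if_neg (fun hc => h2 (dvd_trans (dvd_pow_self 2 n.succ_ne_zero) hc))]

lemma keyG (l d : ℕ) (hd : 1 ≤ d) (m : ℕ) :
    PowerSeries.coeff m
      ((PowerSeries.mk fun m =>
          if l ≤ padicValNat 2 (m + 1) ∧ padicValNat 2 (m + 1) % d = l % d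
          then (1 : ZMod 2) else 0) +
        ∑ n ∈ Finset.Ico 1 d, PowerSeries.X ^ (2 ^ n - 1) *
          (PowerSeries.mk fun m =>
            if l ≤ padicValNat 2 (m + 1) ∧ padicValNat 2 (m + 1) % d = l % d
            then (1 : ZMod 2) else 0) ^ 2 ^ n) =
      if 2 ^ l ∣ m + 1 then 1 else 0 := by
  set f : ℕ → ZMod 2 := fun m =>
    if l ≤ padicValNat 2 (m + 1) ∧ padicValNat 2 (m + 1) % d = l % d
    then (1 : ZMod 2) else 0 with hf
  set v := padicValNat 2 (m + 1) with hv
  have hm0 : m + 1 ≠ 0 := by omega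
  have hdvd_iff : ∀ n : ℕ, 2 ^ n ∣ m + 1 ↔ n ≤ v := fun n =>
    padicValNat_dvd_iff_le hm0
  have hT : ∀ n : ℕ,
      PowerSeries.coeff m (PowerSeries.X ^ (2 ^ n - 1) * (PowerSeries.mk f) ^ 2 ^ n) =
        if n ≤ v ∧ l + n ≤ v ∧ (v - n) % d = l % d then 1 else 0 := by
    intro n
    have h1 : 1 ≤ 2 ^ n := Nat.one_le_two_pow
    rw [PowerSeries.coeff_X_pow_mul']
    by_cases hn : n ≤ v
    · have hdv : 2 ^ n ∣ m + 1 := (hdvd_iff n).mpr hn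
      have hle : 2 ^ n - 1 ≤ m := by
        have := Nat.le_of_dvd (by omega) hdv; omega
      have heq : m - (2 ^ n - 1) = (m + 1) - 2 ^ n := by omega
      have hdv2 : 2 ^ n ∣ m - (2 ^ n - 1) := by
        rw [heq]; exact Nat.dvd_sub hdv dvd_rfl
      rw [if_pos hle, coeff_pow2, if_pos hdv2, PowerSeries.coeff_mk]
      show (if l ≤ padicValNat 2 ((m - (2 ^ n - 1)) / 2 ^ n + 1) ∧
            padicValNat 2 ((m - (2 ^ n - 1)) / 2 ^ n + 1) % d = l % d
          then (1 : ZMod 2) else 0) = _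
      have hq : (m - (2 ^ n - 1)) / 2 ^ n + 1 = (m + 1) / 2 ^ n := by
        obtain ⟨c, hc⟩ := hdv
        have hc0 : c ≠ 0 := by rintro rfl; omega
        have h2 : m - (2 ^ n - 1) = 2 ^ n * (c - 1) := by
          rw [heq, hc, Nat.mul_sub, Nat.mul_one]
        rw [h2, hc, Nat.mul_div_cancel_left _ (by omega : 0 < 2 ^ n),
          Nat.mul_div_cancel_left _ (by omega : 0 < 2 ^ n)]
        omega
      have hvq : padicValNat 2 ((m - (2 ^ n - 1)) / 2 ^ n + 1) = v - n := by
        rw [hq, hv]; exact padicValNat.div_pow hdv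
      rw [hvq]
      have hiff : (l ≤ v - n ∧ (v - n) % d = l % d) ↔
          (n ≤ v ∧ l + n ≤ v ∧ (v - n) % d = l % d) := by
        constructor
        · rintro ⟨a, b⟩; exact ⟨hn, by omega, b⟩
        · rintro ⟨_, a, b⟩; exact ⟨by omega, b⟩
      exact if_congr hiff rfl rfl
    · have hnd : ¬ 2 ^ n ∣ m + 1 := fun h => hn ((hdvd_iff n).mp h)
      have hr : (if n ≤ v ∧ l + n ≤ v ∧ (v - n) % d = l % d then (1 : ZMod 2) else 0) = 0 :=
        if_neg (fun hc => hn hc.1)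
      rw [hr]
      split_ifs with hle
      · rw [coeff_pow2]
        split_ifs with hdv2
        · exfalso
          apply hnd
          have hh : m + 1 = (m - (2 ^ n - 1)) + 2 ^ n := by omega
          rw [hh]
          exact Nat.dvd_add hdv2 dvd_rfl
        · rfl
      · rfl
  rw [map_add, map_sum]
  have h0 : PowerSeries.coeff m (PowerSeries.mk f) =
      if 0 ≤ v ∧ l + 0 ≤ v ∧ (v - 0) % d = l % d then 1 else 0 := by
    rw [PowerSeries.coeff_mk]
    show (if l ≤ padicValNat 2 (m + 1) ∧ padicValNat 2 (m + 1) % d = l % d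
        then (1 : ZMod 2) else 0) = _
    have hiff : (l ≤ v ∧ v % d = l % d) ↔ (0 ≤ v ∧ l + 0 ≤ v ∧ (v - 0) % d = l % d) := by
      constructor
      · rintro ⟨a, b⟩
        refine ⟨Nat.zero_le _, by omega, ?_⟩
        rw [Nat.sub_zero]; exact b
      · rintro ⟨_, a, b⟩
        rw [Nat.sub_zero] at b
        exact ⟨by omega, b⟩
    exact if_congr hiff rfl rfl
  rw [h0, Finset.sum_congr rfl (fun n _ => hT n)]
  rw [← Finset.sum_eq_sum_Ico_succ_bot hd
    (fun n => if n ≤ v ∧ l + n ≤ v ∧ (v - n) % d = l % d then (1 : ZMod 2) else 0)]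
  rw [← Finset.range_eq_Ico]
  have key : ∀ n ∈ Finset.range d,
      ((n ≤ v ∧ l + n ≤ v ∧ (v - n) % d = l % d) ↔ (l ≤ v ∧ n = (v - l) % d)) := by
    intro n hn
    rw [Finset.mem_range] at hn
    constructor
    · rintro ⟨h1, h2, h3⟩
      refine ⟨by omega, ?_⟩
      have h4 : l ≤ v - n := by omega
      have h5 : d ∣ (v - n) - l := (Nat.modEq_iff_dvd' h4).mp h3.symm
      obtain ⟨c, hc⟩ := h5
      have h6 : v - l = n + d * c := by omega
      rw [h6, Nat.add_mul_mod_self_left, Nat.mod_eq_of_lt hn]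
    · rintro ⟨h1, rfl⟩
      have h2 : (v - l) % d ≤ v - l := Nat.mod_le _ _
      refine ⟨by omega, by omega, ?_⟩
      have h3 := Nat.mod_add_div (v - l) d
      have h4 : v - (v - l) % d = l + d * ((v - l) / d) := by omega
      rw [h4, Nat.add_mul_mod_self_left]
  rw [Finset.sum_congr rfl (fun n hn => if_congr (key n hn) rfl rfl)]
  by_cases hlv : l ≤ v
  · simp only [hlv, true_and]
    rw [Finset.sum_ite_eq' (Finset.range d) ((v - l) % d) (fun _ => (1 : ZMod 2)),
      if_pos (Finset.mem_range.mpr (Nat.mod_lt _ hd)), if_pos ((hdvd_iff l).mpr hlv)]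
  · rw [if_neg (fun h => hlv ((hdvd_iff l).mp h))]
    simp [hlv]


/-- Let `F₀ ∈ F₂[[z]]` have coefficient 1 at `z^m` exactly when
`ν₂(m+1) ≥ l` and `ν₂(m+1) ≡ l (mod d)`.  Then
`(1 + z^{2^l})·(F₀ + Σ_{n=1}^{d−1} z^{2^n−1} F₀^{2^n}) = z^{2^l−1}`. -/
theorem stmt7 (l d : ℕ) (hd : 1 ≤ d)
    (F₀ : PowerSeries (ZMod 2))
    (hF₀ : F₀ = PowerSeries.mk fun m =>
      if l ≤ padicValNat 2 (m + 1) ∧ padicValNat 2 (m + 1) % d = l % d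
      then 1 else 0) :
    (1 + PowerSeries.X ^ 2 ^ l) *
        (F₀ + ∑ n ∈ Finset.Ico 1 d, PowerSeries.X ^ (2 ^ n - 1) * F₀ ^ 2 ^ n) =
      PowerSeries.X ^ (2 ^ l - 1) := by
  subst hF₀
  ext m
  rw [add_mul, one_mul, map_add, PowerSeries.coeff_X_pow_mul', keyG l d hd,
    keyG l d hd, PowerSeries.coeff_X_pow]
  have hP : 1 ≤ 2 ^ l := Nat.one_le_two_pow
  by_cases hdvd : 2 ^ l ∣ m + 1
  · by_cases hm : m = 2 ^ l - 1
    · rw [if_pos hdvd, if_neg (by omega : ¬ 2 ^ l ≤ m), if_pos hm, add_zero]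
    · have hne : m + 1 ≠ 2 ^ l := by omega
      have h1 : 2 ^ l ≤ m + 1 := Nat.le_of_dvd (by omega) hdvd
      have hge : 2 ^ l ≤ m := by omega
      have hdvd2 : 2 ^ l ∣ (m - 2 ^ l) + 1 := by
        have heq : (m - 2 ^ l) + 1 = (m + 1) - 2 ^ l := by omega
        rw [heq]; exact Nat.dvd_sub hdvd dvd_rfl
      rw [if_pos hdvd, if_pos hge, if_pos hdvd2, if_neg hm]
      decide
  · have hm : m ≠ 2 ^ l - 1 := by
      intro h
      apply hdvd
      have : m + 1 = 2 ^ l := by omega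
      rw [this]
    rw [if_neg hdvd, if_neg hm, zero_add]
    by_cases hge : 2 ^ l ≤ m
    · rw [if_pos hge, if_neg]
      intro h
      apply hdvd
      have heq : m + 1 = ((m - 2 ^ l) + 1) + 2 ^ l := by omega
      rw [heq]
      exact Nat.dvd_add h dvd_rfl
    · rw [if_neg hge]
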